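/- If C is a linear code over R of length n (an R-submodule of Rⁿ) with |C| = p^k and minimum Lee weight d (the least Lee weight of a nonzero codeword), then φ_L(C) is an F_p-linear subspace of F_p^{8n} of dimension k whose minimum Hamming weight (least number of nonzero entries of a nonzero element) is d. -/
import Mathlib


open Polynomial

set_option synthInstance.maxHeartbeats 1000000
set_option maxHeartbeats 1000000

noncomputable section

/-- The ring `R = F_p[u,v,w]/⟨u², v², w²⟩`. -/
abbrev Rquot (p : ℕ) : Type :=
  MvPolynomial (Fin 3) (ZMod p) ⧸
    (Ideal.span {MvPolynomial.X 0 ^ 2, MvPolynomial.X 1 ^ 2, MvPolynomial.X 2 ^ 2} :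
      Ideal (MvPolynomial (Fin 3) (ZMod p)))

/-- The element `u` of `R`. -/
def uu (p : ℕ) : Rquot p := Ideal.Quotient.mk _ (MvPolynomial.X 0)

/-- The element `v` of `R`. -/
def vv (p : ℕ) : Rquot p := Ideal.Quotient.mk _ (MvPolynomial.X 1)

/-- The element `w` of `R`. -/
def ww (p : ℕ) : Rquot p := Ideal.Quotient.mk _ (MvPolynomial.X 2)

/-- The monomials `1, u, v, uv, w, uw, vw, uvw` of `R`. -/
def mons (p : ℕ) : Fin 8 → Rquot p :=
  ![1, uu p, vv p, uu p * vv p, ww p, uu p * ww p, vv p * ww p, uu p * vv p * ww p]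

/-- The Gray image of the coordinate vector `(α₁, …, α₈)` (indexed by `0, …, 7`). -/
def grayVec (p : ℕ) (α : Fin 8 → ZMod p) : Fin 8 → ZMod p :=
  ![α 7, α 5 + α 7, α 6 + α 7, α 3 + α 7, α 4 + α 5 + α 6 + α 7,
    α 1 + α 3 + α 5 + α 7, α 2 + α 3 + α 6 + α 7,
    α 0 + α 1 + α 2 + α 3 + α 4 + α 5 + α 6 + α 7]

/-- `α₁ + uα₂ + vα₃ + uvα₄ + wα₅ + uwα₆ + vwα₇ + uvwα₈ ∈ R`. -/
def combo (p : ℕ) (α : Fin 8 → ZMod p) : Rquot p :=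
  ∑ j : Fin 8, α j • mons p j

/-- Hamming weight (number of nonzero entries) of an element of `(F_p⁸)ⁿ`. -/
def hamWt {n : ℕ} {p : ℕ} (x : Fin n → Fin 8 → ZMod p) : ℕ :=
  Set.ncard {ij : Fin n × Fin 8 | x ij.1 ij.2 ≠ 0}

lemma usq (p : ℕ) : uu p * uu p = 0 := by
  rw [uu, ← map_mul, ← sq]
  exact Ideal.Quotient.eq_zero_iff_mem.2 (Ideal.subset_span (by simp))

lemma vsq (p : ℕ) : vv p * vv p = 0 := by
  rw [vv, ← map_mul, ← sq]
  exact Ideal.Quotient.eq_zero_iff_mem.2 (Ideal.subset_span (by simp))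

lemma wsq (p : ℕ) : ww p * ww p = 0 := by
  rw [ww, ← map_mul, ← sq]
  exact Ideal.Quotient.eq_zero_iff_mem.2 (Ideal.subset_span (by simp))

lemma key_mem (p : ℕ) (x : Rquot p) (h : (∃ j, mons p j = x) ∨ x = 0) :
    x ∈ Submodule.span (ZMod p) (Set.range (mons p)) := by
  rcases h with ⟨j, rfl⟩ | rfl
  · exact Submodule.subset_span ⟨j, rfl⟩
  · exact Submodule.zero_mem _

lemma mulu (p : ℕ) (x : Rquot p) (hx : x ∈ Submodule.span (ZMod p) (Set.range (mons p))) :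
    uu p * x ∈ Submodule.span (ZMod p) (Set.range (mons p)) := by
  induction hx using Submodule.span_induction with
  | mem y hy =>
      obtain ⟨j, rfl⟩ := hy
      fin_cases j
      · show uu p * 1 ∈ _; exact key_mem p _ (Or.inl ⟨1, by show uu p = uu p * 1; ring⟩)
      · show uu p * uu p ∈ _; exact key_mem p _ (Or.inr (usq p))
      · show uu p * vv p ∈ _; exact key_mem p _ (Or.inl ⟨3, rfl⟩)
      · show uu p * (uu p * vv p) ∈ _
        exact key_mem p _ (Or.inr (by linear_combination vv p * usq p))
      · show uu p * ww p ∈ _; exact key_mem p _ (Or.inl ⟨5, rfl⟩)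
      · show uu p * (uu p * ww p) ∈ _
        exact key_mem p _ (Or.inr (by linear_combination ww p * usq p))
      · show uu p * (vv p * ww p) ∈ _
        exact key_mem p _ (Or.inl ⟨7, by show uu p * vv p * ww p = _; ring⟩)
      · show uu p * (uu p * vv p * ww p) ∈ _
        exact key_mem p _ (Or.inr (by linear_combination vv p * ww p * usq p))
  | zero => simpa using Submodule.zero_mem _
  | add a b _ _ ha hb => simpa [mul_add] using Submodule.add_mem _ ha hb
  | smul r a _ ha => simpa [mul_smul_comm] using Submodule.smul_mem _ r ha

lemma mulv (p : ℕ) (x : Rquot p) (hx : x ∈ Submodule.span (ZMod p) (Set.range (mons p))) :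
    vv p * x ∈ Submodule.span (ZMod p) (Set.range (mons p)) := by
  induction hx using Submodule.span_induction with
  | mem y hy =>
      obtain ⟨j, rfl⟩ := hy
      fin_cases j
      · show vv p * 1 ∈ _; exact key_mem p _ (Or.inl ⟨2, by show vv p = vv p * 1; ring⟩)
      · show vv p * uu p ∈ _; exact key_mem p _ (Or.inl ⟨3, by show uu p * vv p = _; ring⟩)
      · show vv p * vv p ∈ _; exact key_mem p _ (Or.inr (vsq p))
      · show vv p * (uu p * vv p) ∈ _
        exact key_mem p _ (Or.inr (by linear_combination uu p * vsq p))
      · show vv p * ww p ∈ _; exact key_mem p _ (Or.inl ⟨6, rfl⟩)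
      · show vv p * (uu p * ww p) ∈ _
        exact key_mem p _ (Or.inl ⟨7, by show uu p * vv p * ww p = _; ring⟩)
      · show vv p * (vv p * ww p) ∈ _
        exact key_mem p _ (Or.inr (by linear_combination ww p * vsq p))
      · show vv p * (uu p * vv p * ww p) ∈ _
        exact key_mem p _ (Or.inr (by linear_combination uu p * ww p * vsq p))
  | zero => simpa using Submodule.zero_mem _
  | add a b _ _ ha hb => simpa [mul_add] using Submodule.add_mem _ ha hb
  | smul r a _ ha => simpa [mul_smul_comm] using Submodule.smul_mem _ r ha

lemma mulw (p : ℕ) (x : Rquot p) (hx : x ∈ Submodule.span (ZMod p) (Set.range (mons p))) :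
    ww p * x ∈ Submodule.span (ZMod p) (Set.range (mons p)) := by
  induction hx using Submodule.span_induction with
  | mem y hy =>
      obtain ⟨j, rfl⟩ := hy
      fin_cases j
      · show ww p * 1 ∈ _; exact key_mem p _ (Or.inl ⟨4, by show ww p = ww p * 1; ring⟩)
      · show ww p * uu p ∈ _; exact key_mem p _ (Or.inl ⟨5, by show uu p * ww p = _; ring⟩)
      · show ww p * vv p ∈ _; exact key_mem p _ (Or.inl ⟨6, by show vv p * ww p = _; ring⟩)
      · show ww p * (uu p * vv p) ∈ _
        exact key_mem p _ (Or.inl ⟨7, by show uu p * vv p * ww p = _; ring⟩)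
      · show ww p * ww p ∈ _; exact key_mem p _ (Or.inr (wsq p))
      · show ww p * (uu p * ww p) ∈ _
        exact key_mem p _ (Or.inr (by linear_combination uu p * wsq p))
      · show ww p * (vv p * ww p) ∈ _
        exact key_mem p _ (Or.inr (by linear_combination vv p * wsq p))
      · show ww p * (uu p * vv p * ww p) ∈ _
        exact key_mem p _ (Or.inr (by linear_combination uu p * vv p * wsq p))
  | zero => simpa using Submodule.zero_mem _
  | add a b _ _ ha hb => simpa [mul_add] using Submodule.add_mem _ ha hb
  | smul r a _ ha => simpa [mul_smul_comm] using Submodule.smul_mem _ r ha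

lemma span_mons (p : ℕ) : Submodule.span (ZMod p) (Set.range (mons p)) = ⊤ := by
  rw [eq_top_iff]
  rintro x -
  obtain ⟨f, rfl⟩ := Ideal.Quotient.mk_surjective x
  induction f using MvPolynomial.induction_on with
  | C a =>
      have h1 : (Ideal.Quotient.mk _ (MvPolynomial.C a : MvPolynomial (Fin 3) (ZMod p)) : Rquot p)
          = a • (1 : Rquot p) := by
        rw [← Algebra.algebraMap_eq_smul_one]; rfl
      rw [h1]
      exact Submodule.smul_mem _ a (key_mem p _ (Or.inl ⟨0, rfl⟩))
  | add f g hf hg => simpa [map_add] using Submodule.add_mem _ hf hg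
  | mul_X f i hf =>
      have h1 : (Ideal.Quotient.mk _ (f * MvPolynomial.X i) : Rquot p)
          = (Ideal.Quotient.mk _ (MvPolynomial.X i) : Rquot p) * Ideal.Quotient.mk _ f := by
        rw [map_mul, mul_comm]
      rw [h1]
      fin_cases i
      · exact mulu p _ hf
      · exact mulv p _ hf
      · exact mulw p _ hf

lemma combo_surj (p : ℕ) (x : Rquot p) : ∃ α : Fin 8 → ZMod p, combo p α = x := by
  have hx : x ∈ Submodule.span (ZMod p) (Set.range (mons p)) := by
    rw [span_mons]; trivial
  obtain ⟨c, hc⟩ := (Submodule.mem_span_range_iff_exists_fun _).1 hx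
  exact ⟨c, hc⟩


/-- If `C` is a linear code of length `n` over `R` with `p^k` elements and minimum Lee
weight `d`, then its Gray image is an `F_p`-linear code of length `8n`, dimension `k`
and minimum Hamming weight `d`. -/
theorem stmt3 (p : ℕ) [Fact p.Prime] (n k d : ℕ) (hn : 0 < n)
    (φ : Rquot p →ₗ[ZMod p] (Fin 8 → ZMod p))
    (hφ : ∀ α : Fin 8 → ZMod p, φ (combo p α) = grayVec p α)
    (C : Submodule (Rquot p) (Fin n → Rquot p))
    (hcard : Nat.card C = p ^ k)
    (hd : IsLeast {m | ∃ c ∈ C, c ≠ (0 : Fin n → Rquot p) ∧ hamWt (fun i => φ (c i)) = m} d) :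
    ∃ V : Submodule (ZMod p) (Fin n → Fin 8 → ZMod p),
      (V : Set (Fin n → Fin 8 → ZMod p)) = (fun c : Fin n → Rquot p => fun i => φ (c i)) '' C ∧
      Module.finrank (ZMod p) V = k ∧
      IsLeast {m | ∃ x ∈ V, x ≠ 0 ∧ hamWt x = m} d := by
  haveI : NeZero p := ⟨(Fact.out (p := p.Prime)).pos.ne'⟩
  -- grayVec is injective at 0
  have hg0 : ∀ α : Fin 8 → ZMod p, grayVec p α = 0 → α = 0 := by
    intro α h
    have h0 : α 7 = 0 := congrFun h 0
    have h1 : α 5 + α 7 = 0 := congrFun h 1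
    have h2 : α 6 + α 7 = 0 := congrFun h 2
    have h3 : α 3 + α 7 = 0 := congrFun h 3
    have h4 : α 4 + α 5 + α 6 + α 7 = 0 := congrFun h 4
    have h5 : α 1 + α 3 + α 5 + α 7 = 0 := congrFun h 5
    have h6 : α 2 + α 3 + α 6 + α 7 = 0 := congrFun h 6
    have h7 : α 0 + α 1 + α 2 + α 3 + α 4 + α 5 + α 6 + α 7 = 0 := congrFun h 7
    funext j
    fin_cases j
    · show α 0 = 0; linear_combination h7 - h4 - h5 - h6 + h3 + h1 + h2 - h0
    · show α 1 = 0; linear_combination h5 - h3 - h1 + h0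
    · show α 2 = 0; linear_combination h6 - h3 - h2 + h0
    · show α 3 = 0; linear_combination h3 - h0
    · show α 4 = 0; linear_combination h4 - h1 - h2 + h0
    · show α 5 = 0; linear_combination h1 - h0
    · show α 6 = 0; linear_combination h2 - h0
    · show α 7 = 0; linear_combination h0
  have hker : ∀ x : Rquot p, φ x = 0 → x = 0 := by
    intro x hx
    obtain ⟨α, rfl⟩ := combo_surj p x
    rw [hφ] at hx
    rw [hg0 α hx]
    simp [combo]
  have hinj : Function.Injective φ := by
    intro a b hab
    have := hker (a - b) (by rw [map_sub, hab, sub_self])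
    exact sub_eq_zero.mp this
  set Φ : (Fin n → Rquot p) →ₗ[ZMod p] (Fin n → Fin 8 → ZMod p) :=
    LinearMap.pi (fun i => φ.comp (LinearMap.proj i)) with hΦ
  have hΦapp : ∀ c : Fin n → Rquot p, Φ c = fun i => φ (c i) := fun c => rfl
  have hΦinj : Function.Injective Φ := by
    intro a b h
    funext i
    exact hinj (congrFun h i)
  refine ⟨(C.restrictScalars (ZMod p)).map Φ, ?_, ?_, ?_⟩
  · rw [Submodule.map_coe, Submodule.coe_restrictScalars]
    rfl
  · -- dimension
    have hVcard : Nat.card ((C.restrictScalars (ZMod p)).map Φ) = p ^ k := by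
      rw [← hcard]
      have himg : ((C.restrictScalars (ZMod p)).map Φ : Set (Fin n → Fin 8 → ZMod p))
          = Φ '' (C : Set (Fin n → Rquot p)) := by
        rw [Submodule.map_coe, Submodule.coe_restrictScalars]
      exact (Nat.card_congr (Equiv.setCongr himg)).trans
        (Nat.card_image_of_injective hΦinj _)
    haveI : Fintype ((C.restrictScalars (ZMod p)).map Φ) := Fintype.ofFinite _
    have hc2 : Fintype.card ((C.restrictScalars (ZMod p)).map Φ)
        = Fintype.card (ZMod p) ^ Module.finrank (ZMod p) ((C.restrictScalars (ZMod p)).map Φ) :=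
      Module.card_eq_pow_finrank
    rw [ZMod.card, ← Nat.card_eq_fintype_card, hVcard] at hc2
    exact (Nat.pow_right_injective (Fact.out (p := p.Prime)).two_le hc2.symm)
  · have hsets : {m | ∃ x ∈ (C.restrictScalars (ZMod p)).map Φ, x ≠ 0 ∧ hamWt x = m}
        = {m | ∃ c ∈ C, c ≠ (0 : Fin n → Rquot p) ∧ hamWt (fun i => φ (c i)) = m} := by
      ext m
      constructor
      · rintro ⟨x, hx, hx0, rfl⟩
        obtain ⟨c, hc, rfl⟩ := Submodule.mem_map.1 hx
        refine ⟨c, hc, ?_, rfl⟩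
        intro h
        exact hx0 (by rw [h, map_zero])
      · rintro ⟨c, hc, hc0, rfl⟩
        refine ⟨Φ c, Submodule.mem_map_of_mem hc, ?_, rfl⟩
        intro h
        exact hc0 (hΦinj (by rw [h, map_zero]))
    rw [hsets]
    exact hd

end
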